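/- Let A be a Lebesgue-measurable subset of [0,1] of positive measure and let g_1,…,g_n ∈ L¹[0,1]. Let C = { f ∈ L¹[0,1] : |f| ≤ 1_A almost everywhere and ∫_A f g_i dμ = 0 for i = 1,…,n }. Then every extreme point u of the convex set C satisfies |u| = 1_A almost everywhere. -/

import Mathlib

open MeasureTheory Filter Topology

noncomputable section

/-- Lebesgue measure restricted to `[0,1]`. -/
abbrev μ01 : Measure ℝ := MeasureTheory.volume.restrict (Set.Icc 0 1)

/-- The space `L¹[0,1]`. -/
abbrev L1 : Type := Lp ℝ 1 μ01

lemma μ01_ne_top (s : Set ℝ) : μ01 s ≠ ⊤ := by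
  refine ne_of_lt (lt_of_le_of_lt (measure_mono (Set.subset_univ s)) ?_)
  rw [Measure.restrict_apply_univ, Real.volume_Icc]
  norm_num

open Classical in
/-- The indicator function `1ₛ` as an element of `L¹[0,1]`. -/
def indL1 (s : Set ℝ) : L1 :=
  if h : MeasurableSet s then indicatorConstLp 1 h (μ01_ne_top s) (1:ℝ) else 0

/-- An operator `T : L¹[0,1] → Y` is completely continuous if it maps weakly
convergent sequences to norm convergent sequences. -/
def CompletelyContinuous {Y : Type*} [NormedAddCommGroup Y] [NormedSpace ℝ Y]
    (T : L1 →L[ℝ] Y) : Prop :=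
  ∀ (f : ℕ → L1) (f₀ : L1),
    (∀ φ : L1 →L[ℝ] ℝ, Tendsto (fun t => φ (f t)) atTop (𝓝 (φ f₀))) →
    Tendsto (fun t => T (f t)) atTop (𝓝 (T f₀))

/-- Lemma 2: if `A ⊆ [0,1]` has positive measure, `g 1, …, g n ∈ L¹`, and
`C = {f ∈ L¹ : |f| ≤ 1_A a.e. and ∫_A f gᵢ dμ = 0 for all i}`, then every extreme
point `u` of `C` (i.e. `u` is not the midpoint of two distinct points of `C`)
satisfies `|u| = 1_A` almost everywhere. -/
theorem stmt1 (A : Set ℝ) (hA : MeasurableSet A) (hA1 : A ⊆ Set.Icc 0 1)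
    (hApos : 0 < μ01 A) (n : ℕ) (g : Fin n → ℝ → ℝ)
    (hg : ∀ i, Integrable (g i) μ01)
    (C : Set L1)
    (hC : C = {f : L1 | (∀ᵐ x ∂μ01, |f x| ≤ A.indicator (fun _ => (1:ℝ)) x) ∧
                ∀ i, ∫ x in A, f x * g i x ∂μ01 = 0})
    (u : L1) (huC : u ∈ C)
    (hext : ∀ f₁ ∈ C, ∀ f₂ ∈ C, u = (2⁻¹ : ℝ) • f₁ + (2⁻¹ : ℝ) • f₂ → f₁ = f₂) :
    ∀ᵐ x ∂μ01, |u x| = A.indicator (fun _ => (1:ℝ)) x := by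
  subst hC
  obtain ⟨hu1, hu2⟩ := huC
  by_contra hcon
  set U : ℝ → ℝ := ⇑u with hUdef
  have hUsm : StronglyMeasurable U := Lp.stronglyMeasurable u
  have hUm : Measurable U := hUsm.measurable
  -- Step A: find ε and a positive-measure subset of A where |u| ≤ 1 - ε
  have key : ∃ ε : ℝ, 0 < ε ∧ ε ≤ 1 ∧ 0 < μ01 (A ∩ {x | |U x| ≤ 1 - ε}) := by
    by_contra hno
    push_neg at hno
    have hz : ∀ m : ℕ, μ01 (A ∩ {x | |U x| ≤ 1 - (1/(m+2) : ℝ)}) = 0 := by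
      intro m
      have h1 : (0:ℝ) < 1/(m+2) := by positivity
      have h2 : (1/(m+2) : ℝ) ≤ 1 := by
        rw [div_le_one (by positivity)]
        have : (0:ℝ) ≤ (m:ℝ) := Nat.cast_nonneg m
        linarith
      have := hno _ h1 h2
      exact le_antisymm this zero_le
    have hsub : A ∩ {x | |U x| < 1} ⊆ ⋃ m : ℕ, A ∩ {x | |U x| ≤ 1 - (1/(m+2) : ℝ)} := by
      rintro x ⟨hxA, hx⟩
      obtain ⟨m, hm⟩ := exists_nat_one_div_lt (show (0:ℝ) < 1 - |U x| by linarith [hx.out])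
      refine Set.mem_iUnion.mpr ⟨m, hxA, ?_⟩
      have : (1/(m+2) : ℝ) ≤ 1/(m+1) := by
        apply div_le_div_of_nonneg_left (by norm_num) (by positivity)
        push_cast; linarith
      simp only [Set.mem_setOf_eq]
      have := this.trans hm.le
      linarith
    have hE0 : μ01 (A ∩ {x | |U x| < 1}) = 0 :=
      measure_mono_null hsub (by rw [measure_iUnion_null_iff]; exact hz)
    apply hcon
    have h2 : ∀ᵐ x ∂μ01, x ∉ A ∩ {x | |U x| < 1} := by
      rw [ae_iff]; simp only [not_not, Set.setOf_mem_eq]; exact hE0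
    filter_upwards [hu1, h2] with x hx1 hx2
    by_cases hxA : x ∈ A
    · rw [Set.indicator_of_mem hxA] at hx1 ⊢
      have : ¬ |U x| < 1 := fun h => hx2 ⟨hxA, h⟩
      linarith [not_lt.mp this]
    · rw [Set.indicator_of_notMem hxA] at hx1 ⊢
      exact le_antisymm hx1 (abs_nonneg _)
  obtain ⟨ε, hε0, hε1, hBpos⟩ := key
  set B : Set ℝ := A ∩ {x | |U x| ≤ 1 - ε} with hBdef
  have hB : MeasurableSet B := hA.inter (measurableSet_le (hUm.abs) measurable_const)
  have hBA : B ⊆ A := Set.inter_subset_left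
  have hB01 : B ⊆ Set.Icc 0 1 := hBA.trans hA1
  -- Step C: kernel vector
  set M : Matrix (Fin n) (Fin (n+1)) ℝ :=
    fun i j => ∫ x in B, x^(j:ℕ) * g i x ∂μ01 with hMdef
  have hnotinj : ¬ Function.Injective (M.mulVecLin) := by
    intro hinj
    have := LinearMap.finrank_le_finrank_of_injective hinj
    simp [Module.finrank_pi] at this
  obtain ⟨a, b, hab, habne⟩ : ∃ a b, M.mulVecLin a = M.mulVecLin b ∧ a ≠ b := by
    by_contra hcon2
    push_neg at hcon2
    exact hnotinj fun a b hh => hcon2 a b hh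
  set c : Fin (n+1) → ℝ := a - b with hcdef
  have hc0 : c ≠ 0 := sub_ne_zero.mpr habne
  have hMc : M.mulVec c = 0 := by
    have : M.mulVecLin c = 0 := by rw [hcdef, map_sub, hab, sub_self]
    simpa using this
  -- Step D: the polynomial
  set P : ℝ → ℝ := fun x => ∑ j : Fin (n+1), c j * x^(j:ℕ) with hPdef
  have hPcont : Continuous P := by fun_prop
  have hProots : Set.Finite {x : ℝ | P x = 0} := by
    set p : Polynomial ℝ := ∑ j : Fin (n+1), Polynomial.C (c j) * Polynomial.X ^ (j:ℕ) with hpdef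
    have hpe : ∀ x, p.eval x = P x := by
      intro x; simp [hpdef, hPdef, Polynomial.eval_finset_sum]
    have hp0 : p ≠ 0 := by
      obtain ⟨j, hj⟩ := Function.ne_iff.mp hc0
      intro hzero
      apply hj
      have hcoeff : p.coeff (j:ℕ) = c j := by
        rw [hpdef, Polynomial.finset_sum_coeff, Finset.sum_eq_single j]
        · simp
        · intro b _ hbj
          simp [Polynomial.coeff_C_mul, Polynomial.coeff_X_pow, Fin.val_eq_val, hbj.symm]
        · simp
      rw [hzero] at hcoeff
      simpa using hcoeff.symm
    have hfin := Polynomial.finite_setOf_isRoot hp0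
    have : {x : ℝ | P x = 0} = {x : ℝ | p.IsRoot x} := by
      ext x; simp [Polynomial.IsRoot, hpe]
    rw [this]; exact hfin
  -- Step E: bounds
  set S : ℝ := ∑ j : Fin (n+1), |c j| with hSdef
  have hS0 : 0 < S := by
    obtain ⟨j, hj⟩ := Function.ne_iff.mp hc0
    have : 0 < |c j| := abs_pos.mpr hj
    exact lt_of_lt_of_le this (Finset.single_le_sum (fun j _ => abs_nonneg (c j)) (Finset.mem_univ j))
  set δ : ℝ := ε / S with hδdef
  have hδ0 : 0 < δ := div_pos hε0 hS0
  have hPbound : ∀ x ∈ Set.Icc (0:ℝ) 1, |δ * P x| ≤ ε := by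
    intro x hx
    have h1 : |P x| ≤ S := by
      rw [hPdef, hSdef]
      refine (Finset.abs_sum_le_sum_abs _ _).trans ?_
      apply Finset.sum_le_sum
      intro j _
      rw [abs_mul]
      have hxp : |x ^ (j:ℕ)| ≤ 1 := by
        rw [abs_pow]
        exact pow_le_one₀ (abs_nonneg x) (abs_le.mpr ⟨by linarith [hx.1], hx.2⟩)
      calc |c j| * |x ^ (j:ℕ)| ≤ |c j| * 1 := by
            exact mul_le_mul_of_nonneg_left hxp (abs_nonneg _)
        _ = |c j| := mul_one _
    rw [abs_mul, abs_of_pos hδ0, hδdef]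
    calc ε / S * |P x| ≤ ε / S * S := by
          exact mul_le_mul_of_nonneg_left h1 (le_of_lt (div_pos hε0 hS0))
      _ = ε := div_mul_cancel₀ ε (ne_of_gt hS0)
  -- Step F: the perturbation h
  set h : ℝ → ℝ := B.indicator (fun x => δ * P x) with hhdef
  have hhm : Measurable h := (measurable_const.mul hPcont.measurable).indicator hB
  have hhbound : ∀ x, |h x| ≤ ε := by
    intro x
    rw [hhdef]
    by_cases hx : x ∈ B
    · rw [Set.indicator_of_mem hx]; exact hPbound x (hB01 hx)
    · rw [Set.indicator_of_notMem hx]; simpa using hε0.le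
  have hhInt : Integrable h μ01 :=
    ((continuous_const.mul hPcont).integrableOn_Icc (μ := volume)).indicator hB
  -- Step G: integral of h * g i vanishes on A
  have hint_pow : ∀ (i : Fin n) (j : ℕ),
      Integrable (fun x => x^j * g i x) (μ01.restrict B) := by
    intro i j
    refine Integrable.bdd_mul (c := 1) ((hg i).restrict (s := B)) ?_ ?_
    · exact (continuous_pow j).aestronglyMeasurable
    · refine (ae_restrict_mem hB).mono fun x hx => ?_
      have hx01 := hB01 hx
      rw [Real.norm_eq_abs, abs_pow]
      exact pow_le_one₀ (abs_nonneg x) (abs_le.mpr ⟨by linarith [hx01.1], hx01.2⟩)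
  have hgA : ∀ i, ∫ x in A, h x * g i x ∂μ01 = 0 := by
    intro i
    have e1 : ∀ x, h x * g i x = B.indicator (fun y => (δ * P y) * g i y) x := by
      intro x
      rw [hhdef]
      by_cases hx : x ∈ B
      · rw [Set.indicator_of_mem hx, Set.indicator_of_mem hx]
      · rw [Set.indicator_of_notMem hx, Set.indicator_of_notMem hx, zero_mul]
    simp_rw [e1]
    rw [integral_indicator hB, Measure.restrict_restrict hB,
      Set.inter_eq_left.mpr hBA]
    have e2 : ∀ x, (δ * P x) * g i x = δ * ∑ j : Fin (n+1), c j * (x^(j:ℕ) * g i x) := by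
      intro x
      rw [hPdef]
      simp only [Finset.sum_mul, Finset.mul_sum]
      congr 1
      ext j
      ring
    simp_rw [e2]
    rw [integral_const_mul, integral_finset_sum]
    · have : ∀ j : Fin (n+1), ∫ x in B, c j * (x^(j:ℕ) * g i x) ∂μ01 = c j * M i j := by
        intro j; rw [integral_const_mul]
      simp_rw [this]
      have hmc := congrFun hMc i
      simp only [Matrix.mulVec, dotProduct, Pi.zero_apply] at hmc
      have : ∑ j : Fin (n+1), c j * M i j = ∑ j : Fin (n+1), M i j * c j := by
        congr 1; ext j; ring
      rw [this, hmc, mul_zero]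
    · intro j _
      exact (hint_pow i (j:ℕ)).const_mul (c j)
  -- integrability of products on A
  have hUgA : ∀ i, Integrable (fun x => U x * g i x) (μ01.restrict A) := by
    intro i
    refine Integrable.bdd_mul (c := 1) ((hg i).restrict (s := A)) ?_ ?_
    · exact hUsm.aestronglyMeasurable.restrict
    · refine ae_restrict_of_ae (hu1.mono fun x hx => ?_)
      rw [Real.norm_eq_abs]
      refine hx.trans ?_
      by_cases hxA : x ∈ A
      · rw [Set.indicator_of_mem hxA]
      · rw [Set.indicator_of_notMem hxA]; norm_num
  have hhgA : ∀ i, Integrable (fun x => h x * g i x) (μ01.restrict A) := by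
    intro i
    refine Integrable.bdd_mul (c := ε) ((hg i).restrict (s := A)) ?_ ?_
    · exact (hhm.stronglyMeasurable.aestronglyMeasurable).restrict
    · exact Eventually.of_forall fun x => by rw [Real.norm_eq_abs]; exact hhbound x
  -- Step I: the two perturbed functions
  set hL : L1 := hhInt.toL1 h with hLdef
  have hLcoe : ⇑hL =ᵐ[μ01] h := hhInt.coeFn_toL1
  have hmemC : ∀ s : ℝ, |s| = 1 →
      u + s • hL ∈ {f : L1 | (∀ᵐ x ∂μ01, |f x| ≤ A.indicator (fun _ => (1:ℝ)) x) ∧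
        ∀ i, ∫ x in A, f x * g i x ∂μ01 = 0} := by
    intro s hs
    have hcoe : ⇑(u + s • hL) =ᵐ[μ01] fun x => U x + s * h x := by
      filter_upwards [Lp.coeFn_add u (s • hL), Lp.coeFn_smul s hL, hLcoe] with x h1 h2 h3
      simp only [h1, Pi.add_apply, h2, Pi.smul_apply, smul_eq_mul, h3]; rfl
    constructor
    · filter_upwards [hu1, hcoe] with x hx1 hx2
      rw [hx2]
      by_cases hxB : x ∈ B
      · have hxA : x ∈ A := hBA hxB
        rw [Set.indicator_of_mem hxA]
        have h1 : |U x| ≤ 1 - ε := hxB.2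
        have h2 : |s * h x| ≤ ε := by
          rw [abs_mul, hs, one_mul]
          rw [hhdef, Set.indicator_of_mem hxB]
          exact hPbound x (hB01 hxB)
        calc |U x + s * h x| ≤ |U x| + |s * h x| := abs_add_le _ _
          _ ≤ (1 - ε) + ε := add_le_add h1 h2
          _ = 1 := by ring
      · have : h x = 0 := by rw [hhdef, Set.indicator_of_notMem hxB]
        rw [this, mul_zero, add_zero]
        exact hx1
    · intro i
      have hce : ∫ x in A, (u + s • hL : L1) x * g i x ∂μ01
          = ∫ x in A, (U x + s * h x) * g i x ∂μ01 := by
        refine integral_congr_ae ?_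
        filter_upwards [ae_restrict_of_ae hcoe] with x hx
        rw [hx]
      rw [hce]
      have : ∀ x, (U x + s * h x) * g i x = U x * g i x + s * (h x * g i x) := by
        intro x; ring
      simp_rw [this]
      rw [integral_add (hUgA i) ((hhgA i).const_mul s), integral_const_mul,
        hu2 i, hgA i, mul_zero, add_zero]
  have hmem1 := hmemC 1 (by norm_num)
  have hmem2 := hmemC (-1) (by norm_num)
  simp only [one_smul, neg_smul] at hmem1 hmem2
  have heq : u + hL = u + -hL := by
    refine hext _ hmem1 _ hmem2 ?_
    module
  have hL0 : hL = 0 := by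
    have h1 : hL = -hL := add_left_cancel heq
    have h2 : (2:ℝ) • hL = 0 := by
      rw [two_smul]
      nth_rewrite 1 [h1]
      exact neg_add_cancel hL
    simpa [smul_eq_zero] using h2
  -- Step K: contradiction, h is nonzero on a positive measure set
  have hh0 : h =ᵐ[μ01] 0 := by
    have : ⇑hL =ᵐ[μ01] 0 := by rw [hL0]; exact Lp.coeFn_zero ℝ 1 μ01
    exact hLcoe.symm.trans this
  have hZ : μ01 {x : ℝ | P x = 0} = 0 := hProots.measure_zero μ01
  have hDpos : 0 < μ01 (B \ {x : ℝ | P x = 0}) := by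
    rw [measure_diff_null hZ]
    exact hBpos
  have hDsub : B \ {x : ℝ | P x = 0} ⊆ {x : ℝ | h x ≠ 0} := by
    rintro x ⟨hxB, hxP⟩
    simp only [Set.mem_setOf_eq] at hxP ⊢
    rw [hhdef, Set.indicator_of_mem hxB]
    exact mul_ne_zero (ne_of_gt hδ0) hxP
  have : μ01 {x : ℝ | h x ≠ 0} = 0 := by
    have := hh0
    rw [Filter.EventuallyEq, ae_iff] at this
    simpa using this
  exact absurd (measure_mono_null hDsub this) (ne_of_gt hDpos)
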